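/- Fix τ ≠ 0. Suppose ν₁^π, …, ν_m^π are eigenvectors of A^π such that H·ν₁^π, …, H·ν_m^π are nonzero and pairwise orthogonal. Then every eigenpair (λ, φ) of A whose eigenvector φ is orthogonal to H·ν_i^π for all i ∈ {1,…,m} satisfies φᵀ·1_n = 0, and (λ, φ) is also an eigenpair of the centered operator: (I_n − τ·1·1ᵀ/n)·A·φ = λ·φ. -/
import Mathlib


open Matrix

/-- Let `A` be symmetric nonnegative, `H` the indicator matrix of an
equitable partition (`A·H = H·Aπ` with `Aπ = (HᵀH)⁻¹·Hᵀ·A·H`) and `τ ≠ 0`. If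
`ν₁^π, …, ν_m^π` are eigenvectors of `Aπ` with `H·ν_i^π` nonzero and pairwise orthogonal,
then every eigenpair `(λ, φ)` of `A` with `φ ⟂ H·ν_i^π` for all `i` satisfies `φᵀ·1 = 0` and
`(I − τ·11ᵀ/n)·A·φ = λ·φ`. -/
theorem stmt_13 {n m : ℕ}
    (A : Matrix (Fin n) (Fin n) ℝ) (hA : A.IsSymm) (hAnn : ∀ i j, 0 ≤ A i j)
    (H : Matrix (Fin n) (Fin m) ℝ)
    (h01 : ∀ i j, H i j = 0 ∨ H i j = 1)
    (hrow : ∀ i, ∑ j, H i j = 1)           -- each row has exactly one entry `1`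
    (hcls : ∀ j, ∃ i, H i j = 1)           -- each class is nonempty
    (Aπ : Matrix (Fin m) (Fin m) ℝ)
    (hAπ : Aπ = (Hᵀ * H)⁻¹ * Hᵀ * A * H)
    (hEP : A * H = H * Aπ)                  -- equitable partition
    (τ : ℝ) (hτ : τ ≠ 0)
    (νπ : Fin m → Fin m → ℝ)
    (heigπ : ∀ i, ∃ μ : ℝ, Aπ *ᵥ νπ i = μ • νπ i)
    (hnz : ∀ i, H *ᵥ νπ i ≠ 0)
    (horth : ∀ i j, i ≠ j → (H *ᵥ νπ i) ⬝ᵥ (H *ᵥ νπ j) = 0) :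
    ∀ (lam : ℝ) (φ : Fin n → ℝ), φ ≠ 0 →
      A *ᵥ φ = lam • φ →
      (∀ i, φ ⬝ᵥ (H *ᵥ νπ i) = 0) →
      (∑ i, φ i = 0) ∧
      (((1 : Matrix (Fin n) (Fin n) ℝ) - (τ / n) • Matrix.of fun _ _ => (1 : ℝ)) * A) *ᵥ φ
        = lam • φ := by
  intro lam phi hphi hAphi hperp
  classical
  have sum_dot : ∀ {ι : Type} [Fintype ι] (f : ι → Fin n → ℝ) (v : Fin n → ℝ),
      (∑ i, f i) ⬝ᵥ v = ∑ i, f i ⬝ᵥ v := by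
    intro ι _ f v
    simp only [dotProduct, Finset.sum_apply, Finset.sum_mul]
    exact Finset.sum_comm
  have dot_sum : ∀ {ι : Type} [Fintype ι] (v : Fin n → ℝ) (f : ι → Fin n → ℝ),
      v ⬝ᵥ (∑ i, f i) = ∑ i, v ⬝ᵥ f i := by
    intro ι _ v f
    simp only [dotProduct, Finset.sum_apply, Finset.mul_sum]
    exact Finset.sum_comm
  have mulVec_sum : ∀ {ι : Type} [Fintype ι] (f : ι → Fin m → ℝ),
      H *ᵥ (∑ i, f i) = ∑ i, H *ᵥ f i := by
    intro ι _ f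
    simpa only [Matrix.mulVecLin_apply] using map_sum H.mulVecLin f Finset.univ
  -- The vectors `H *ᵥ νπ i` are pairwise orthogonal and nonzero, hence lin. independent.
  have hli : LinearIndependent ℝ (fun i => H *ᵥ νπ i) := by
    rw [Fintype.linearIndependent_iff]
    intro g hg j
    have h1 : (∑ i, g i • (H *ᵥ νπ i)) ⬝ᵥ (H *ᵥ νπ j) = 0 := by rw [hg]; simp
    rw [sum_dot] at h1
    rw [Finset.sum_eq_single_of_mem j (Finset.mem_univ j) (fun i _ hij => by
      rw [smul_dotProduct, horth i j hij, smul_zero])] at h1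
    rw [smul_dotProduct, smul_eq_mul] at h1
    rcases mul_eq_zero.mp h1 with h | h
    · exact h
    · exact absurd (dotProduct_self_eq_zero.mp h) (hnz j)
  -- Hence the `νπ i` are linearly independent, so they span `ℝ^m`.
  have hliν : LinearIndependent ℝ νπ := by
    rw [Fintype.linearIndependent_iff] at hli ⊢
    intro g hg
    apply hli g
    have : ∑ i, g i • (H *ᵥ νπ i) = H *ᵥ (∑ i, g i • νπ i) := by
      rw [mulVec_sum fun i => g i • νπ i]
      exact Finset.sum_congr rfl fun i _ => (Matrix.mulVec_smul H (g i) (νπ i)).symm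
    rw [this, hg, Matrix.mulVec_zero]
  have hcard : Fintype.card (Fin m) = Module.finrank ℝ (Fin m → ℝ) := by simp
  have hspan : Submodule.span ℝ (Set.range νπ) = ⊤ :=
    hliν.span_eq_top_of_card_eq_finrank' hcard
  have hmem : (fun _ => (1 : ℝ) : Fin m → ℝ) ∈ Submodule.span ℝ (Set.range νπ) := by
    rw [hspan]; trivial
  obtain ⟨c, hc⟩ := (Submodule.mem_span_range_iff_exists_fun ℝ).mp hmem
  -- the all-ones vector on `Fin n` equals `H *ᵥ` (all-ones on `Fin m`)
  have hone : (fun _ => (1 : ℝ) : Fin n → ℝ) = H *ᵥ (fun _ => 1) := by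
    funext i
    simp only [Matrix.mulVec, dotProduct, mul_one]
    exact (hrow i).symm
  have hsum : ∑ i, phi i = 0 := by
    have h1 : ∑ i, phi i = phi ⬝ᵥ (fun _ => (1 : ℝ)) := by
      simp [dotProduct]
    rw [h1, hone, ← hc, mulVec_sum fun i => c i • νπ i]
    have h2 : ∀ i, H *ᵥ (c i • νπ i) = c i • (H *ᵥ νπ i) := fun i =>
      Matrix.mulVec_smul H (c i) (νπ i)
    simp only [h2]
    rw [dot_sum]
    refine Finset.sum_eq_zero fun i _ => ?_
    rw [dotProduct_smul, hperp i, smul_zero]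
  refine ⟨hsum, ?_⟩
  have hJ : (Matrix.of fun _ _ => (1 : ℝ) : Matrix (Fin n) (Fin n) ℝ) *ᵥ phi = 0 := by
    funext i
    simp only [Matrix.mulVec, dotProduct, Matrix.of_apply, one_mul, Pi.zero_apply]
    exact hsum
  rw [Matrix.sub_mul, one_mul, Matrix.sub_mulVec, Matrix.smul_mul, Matrix.smul_mulVec,
    ← Matrix.mulVec_mulVec, hAphi, Matrix.mulVec_smul, hJ, smul_zero, smul_zero, sub_zero]
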